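/- Let R_m denote the least positive integer r such that there exists A ⊆ Z/mZ with 1 ≤ σ_A(n) ≤ r for all n ∈ Z/mZ. If m₁, m₂ are positive integers with (3/2)·m₁ ≤ m₂ < 2·m₁, then R_{m₂} ≤ 4·R_{m₁}. -/

import Mathlib

def sigmaRep (m : ℕ) (A : Finset (ZMod m)) (n : ZMod m) : ℕ :=
  ((A ×ˢ A).filter (fun p => p.1 + p.2 = n)).card

noncomputable def RuzsaNumber (m : ℕ) : ℕ :=
  sInf {r : ℕ | 0 < r ∧ ∃ A : Finset (ZMod m),
    ∀ n : ZMod m, 1 ≤ sigmaRep m A n ∧ sigmaRep m A n ≤ r}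

lemma mod_two_cases {a m w : ℕ} (h : a < 2 * m) (hm : a % m = w) : a = w ∨ a = w + m := by
  rcases Nat.lt_or_ge a m with h1 | h1
  · left; rw [Nat.mod_eq_of_lt h1] at hm; omega
  · right; rw [Nat.mod_eq_sub_mod h1, Nat.mod_eq_of_lt (by omega)] at hm; omega

/-- Counting pairs from the natural-number lift of `A` with `a + b + k = v`. -/
def Pk (m₁ : ℕ) (A : Finset (ZMod m₁)) (k v : ℕ) : ℕ :=
  (((A.image ZMod.val) ×ˢ (A.image ZMod.val)).filter (fun p => p.1 + p.2 + k = v)).card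

lemma Pk_pair_bound {m₁ r : ℕ} [NeZero m₁] (A : Finset (ZMod m₁))
    (hA : ∀ n, sigmaRep m₁ A n ≤ r) (s t : ℕ) (hne : s ≠ t) (hmod : s % m₁ = t % m₁) :
    Pk m₁ A 0 s + Pk m₁ A 0 t ≤ r := by
  classical
  set A₀ := A.image ZMod.val with hA₀
  have hA₀mem : ∀ a ∈ A₀, ∃ α ∈ A, α.val = a := by
    intro a ha
    simpa [hA₀] using ha
  have hdisj : Disjoint ((A₀ ×ˢ A₀).filter (fun p => p.1 + p.2 + 0 = s))
      ((A₀ ×ˢ A₀).filter (fun p => p.1 + p.2 + 0 = t)) := by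
    rw [Finset.disjoint_left]
    intro p hp hq
    rw [Finset.mem_filter] at hp hq
    omega
  have : Pk m₁ A 0 s + Pk m₁ A 0 t
      = (((A₀ ×ˢ A₀).filter (fun p => p.1 + p.2 + 0 = s)) ∪
         ((A₀ ×ˢ A₀).filter (fun p => p.1 + p.2 + 0 = t))).card := by
    rw [Finset.card_union_of_disjoint hdisj]; rfl
  rw [this]
  refine le_trans ?_ (hA ((s : ℕ) : ZMod m₁))
  unfold sigmaRep
  apply Finset.card_le_card_of_injOn (fun p => ((p.1 : ZMod m₁), (p.2 : ZMod m₁)))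
  · intro p hp
    simp only [Finset.mem_coe, Finset.mem_union, Finset.mem_filter, Finset.mem_product] at hp
    have hp1 : p.1 ∈ A₀ := by rcases hp with ⟨⟨h, _⟩, _⟩ | ⟨⟨h, _⟩, _⟩ <;> exact h
    have hp2 : p.2 ∈ A₀ := by rcases hp with ⟨⟨_, h⟩, _⟩ | ⟨⟨_, h⟩, _⟩ <;> exact h
    obtain ⟨α, hα, hαv⟩ := hA₀mem _ hp1
    obtain ⟨β, hβ, hβv⟩ := hA₀mem _ hp2
    have hsum : p.1 + p.2 = s ∨ p.1 + p.2 = t := by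
      rcases hp with ⟨_, h⟩ | ⟨_, h⟩
      · left; omega
      · right; omega
    simp only [Finset.mem_coe, Finset.mem_filter, Finset.mem_product]
    refine ⟨⟨?_, ?_⟩, ?_⟩
    · simp only [← hαv, ZMod.natCast_val, ZMod.cast_id]; exact hα
    · simp only [← hβv, ZMod.natCast_val, ZMod.cast_id]; exact hβ
    · have hts : ((t : ℕ) : ZMod m₁) = ((s : ℕ) : ZMod m₁) :=
        (ZMod.natCast_eq_natCast_iff _ _ _).mpr hmod.symm
      rcases hsum with h | h
      · rw [← h]; push_cast; ring
      · rw [← hts, ← h]; push_cast; ring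
  · intro p hp q hq hpq
    simp only [Finset.coe_union, Set.mem_union, Finset.coe_filter, Set.mem_setOf_eq,
      Finset.mem_product] at hp hq
    have hlt : ∀ x ∈ A₀, x < m₁ := by
      intro x hx
      obtain ⟨α, _, hαv⟩ := hA₀mem _ hx
      rw [← hαv]; exact ZMod.val_lt α
    have h1 : p.1 < m₁ := hlt _ (by rcases hp with ⟨⟨h, _⟩, _⟩ | ⟨⟨h, _⟩, _⟩ <;> exact h)
    have h2 : p.2 < m₁ := hlt _ (by rcases hp with ⟨⟨_, h⟩, _⟩ | ⟨⟨_, h⟩, _⟩ <;> exact h)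
    have h3 : q.1 < m₁ := hlt _ (by rcases hq with ⟨⟨h, _⟩, _⟩ | ⟨⟨h, _⟩, _⟩ <;> exact h)
    have h4 : q.2 < m₁ := hlt _ (by rcases hq with ⟨⟨_, h⟩, _⟩ | ⟨⟨_, h⟩, _⟩ <;> exact h)
    have e1 : ((p.1 : ZMod m₁)) = (q.1 : ZMod m₁) := congrArg Prod.fst hpq
    have e2 : ((p.2 : ZMod m₁)) = (q.2 : ZMod m₁) := congrArg Prod.snd hpq
    have v1 : p.1 = q.1 := by
      have := congrArg ZMod.val e1
      rwa [ZMod.val_cast_of_lt h1, ZMod.val_cast_of_lt h3] at this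
    have v2 : p.2 = q.2 := by
      have := congrArg ZMod.val e2
      rwa [ZMod.val_cast_of_lt h2, ZMod.val_cast_of_lt h4] at this
    exact Prod.ext v1 v2

lemma Pk_single_bound {m₁ r : ℕ} [NeZero m₁] (A : Finset (ZMod m₁))
    (hA : ∀ n, sigmaRep m₁ A n ≤ r) (s : ℕ) : Pk m₁ A 0 s ≤ r := by
  have hm₁ : 0 < m₁ := Nat.pos_of_ne_zero (NeZero.ne m₁)
  have := Pk_pair_bound A hA s (s + m₁) (by omega) (Nat.add_mod_right s m₁).symm
  omega

lemma Pk_le_sub {m₁ : ℕ} (A : Finset (ZMod m₁)) (k v : ℕ) :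
    Pk m₁ A k v ≤ Pk m₁ A 0 (v - k) := by
  apply Finset.card_le_card
  intro p hp
  rw [Finset.mem_filter] at hp ⊢
  exact ⟨hp.1, by omega⟩

lemma Pk_eq_zero_of_lt {m₁ : ℕ} (A : Finset (ZMod m₁)) {k v : ℕ} (h : v < k) :
    Pk m₁ A k v = 0 := by
  rw [Pk, Finset.card_eq_zero, Finset.filter_eq_empty_iff]
  intro p _
  omega

lemma Pk_eq_zero_of_big {m₁ : ℕ} [NeZero m₁] (A : Finset (ZMod m₁)) {v : ℕ}
    (h : 2 * m₁ - 1 ≤ v) : Pk m₁ A 0 v = 0 := by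
  rw [Pk, Finset.card_eq_zero, Finset.filter_eq_empty_iff]
  intro p hp
  rw [Finset.mem_product] at hp
  have h1 : p.1 < m₁ := by
    obtain ⟨α, _, hv⟩ := Finset.mem_image.mp hp.1
    rw [← hv]; exact ZMod.val_lt α
  have h2 : p.2 < m₁ := by
    obtain ⟨α, _, hv⟩ := Finset.mem_image.mp hp.2
    rw [← hv]; exact ZMod.val_lt α
  omega

theorem stmt_8 (m₁ m₂ : ℕ) (hm₁ : 0 < m₁) (hm₂ : 0 < m₂)
    (h1 : 3 * m₁ ≤ 2 * m₂) (h2 : m₂ < 2 * m₁) :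
    RuzsaNumber m₂ ≤ 4 * RuzsaNumber m₁ := by
  classical
  haveI : NeZero m₁ := ⟨hm₁.ne'⟩
  haveI : NeZero m₂ := ⟨hm₂.ne'⟩
  -- the defining set for m₁ is nonempty
  have hne : {r : ℕ | 0 < r ∧ ∃ A : Finset (ZMod m₁),
      ∀ n : ZMod m₁, 1 ≤ sigmaRep m₁ A n ∧ sigmaRep m₁ A n ≤ r}.Nonempty := by
    refine ⟨m₁ * m₁, Nat.mul_pos hm₁ hm₁, Finset.univ, fun n => ⟨?_, ?_⟩⟩
    · rw [sigmaRep]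
      exact Finset.card_pos.mpr ⟨(0, n), by simp⟩
    · calc ((Finset.univ ×ˢ Finset.univ : Finset (ZMod m₁ × ZMod m₁)).filter
          (fun p => p.1 + p.2 = n)).card
          ≤ (Finset.univ ×ˢ (Finset.univ : Finset (ZMod m₁))).card :=
            Finset.card_filter_le _ _
        _ = m₁ * m₁ := by simp [ZMod.card m₁]
  have hmem : 0 < RuzsaNumber m₁ ∧ ∃ A : Finset (ZMod m₁),
      ∀ n : ZMod m₁, 1 ≤ sigmaRep m₁ A n ∧ sigmaRep m₁ A n ≤ RuzsaNumber m₁ :=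
    Nat.sInf_mem hne
  obtain ⟨hrpos, A, hA⟩ := hmem
  set r := RuzsaNumber m₁ with hr
  have hA1 : ∀ n, 1 ≤ sigmaRep m₁ A n := fun n => (hA n).1
  have hA2 : ∀ n, sigmaRep m₁ A n ≤ r := fun n => (hA n).2
  -- setup
  set d := m₂ - m₁ with hd
  have hdm : m₁ + d = m₂ := by omega
  have h2d : m₁ ≤ d + d := by omega
  have hd1 : 0 < d := by omega
  have hdlt : d < m₁ := by omega
  set c := 2 * m₁ - m₂ with hc
  have hc1 : 0 < c := by omega
  have hcd : d + c = m₁ := by omega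
  have hc2d : c + (d + d) = m₂ := by omega
  set A₀ := A.image ZMod.val with hA₀
  have hA₀lt : ∀ a ∈ A₀, a < m₁ := by
    intro a ha
    obtain ⟨α, _, hv⟩ := Finset.mem_image.mp ha
    rw [← hv]; exact ZMod.val_lt α
  set D := A₀.image (· + d) with hD
  set C := A₀ ∪ D with hC
  have hClt : ∀ x ∈ C, x < m₂ := by
    intro x hx
    rcases Finset.mem_union.mp hx with h | h
    · have := hA₀lt _ h; omega
    · obtain ⟨a, ha, hv⟩ := Finset.mem_image.mp h
      have := hA₀lt _ ha; omega
  set B : Finset (ZMod m₂) := C.image (Nat.cast : ℕ → ZMod m₂) with hB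
  -- representation of each residue class mod m₁ by a sum from A₀
  have hrep : ∀ w : ℕ, w < m₁ → ∃ a ∈ A₀, ∃ b ∈ A₀, a + b = w ∨ a + b = w + m₁ := by
    intro w hw
    have h := hA1 ((w : ℕ) : ZMod m₁)
    rw [sigmaRep, Nat.one_le_iff_ne_zero, ← Nat.pos_iff_ne_zero] at h
    obtain ⟨p, hp⟩ := Finset.card_pos.mp h
    rw [Finset.mem_filter, Finset.mem_product] at hp
    refine ⟨p.1.val, Finset.mem_image_of_mem _ hp.1.1, p.2.val,
      Finset.mem_image_of_mem _ hp.1.2, ?_⟩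
    have hva : (p.1 + p.2).val = (p.1.val + p.2.val) % m₁ := ZMod.val_add _ _
    have hvw : ((w : ZMod m₁)).val = w := ZMod.val_cast_of_lt hw
    have h1 : p.1.val < m₁ := ZMod.val_lt _
    have h2 : p.2.val < m₁ := ZMod.val_lt _
    have := hp.2
    rw [this, hvw] at hva
    rcases mod_two_cases (by omega) hva.symm with h | h
    · left; omega
    · right; omega
  -- casting helper
  have hcast : ∀ u : ℕ, ∀ n : ZMod m₂, (u = n.val ∨ u = n.val + m₂) → ((u : ℕ) : ZMod m₂) = n := by
    intro u n hu
    have hn : ((n.val : ℕ) : ZMod m₂) = n := by simp [ZMod.natCast_val, ZMod.cast_id]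
    rcases hu with rfl | rfl
    · exact hn
    · push_cast [ZMod.natCast_self]
      rw [add_zero]
      exact_mod_cast hn
  apply Nat.sInf_le
  refine ⟨by omega, B, fun n => ⟨?_, ?_⟩⟩
  · -- lower bound : 1 ≤ sigmaRep m₂ B n
    set N := n.val with hN
    have hNlt : N < m₂ := ZMod.val_lt n
    have key : ∃ x ∈ C, ∃ y ∈ C, x + y = N ∨ x + y = N + m₂ := by
      by_cases hcase : N < m₁
      · obtain ⟨a, ha, b, hb, hab⟩ := hrep N hcase
        rcases hab with h | h
        · exact ⟨a, Finset.mem_union_left _ ha, b, Finset.mem_union_left _ hb, Or.inl h⟩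
        · refine ⟨a, Finset.mem_union_left _ ha, b + d,
            Finset.mem_union_right _ (Finset.mem_image.mpr ⟨b, hb, rfl⟩), Or.inr (by omega)⟩
      · obtain ⟨a, ha, b, hb, hab⟩ := hrep (N - d) (by omega)
        rcases hab with h | h
        · refine ⟨a, Finset.mem_union_left _ ha, b + d,
            Finset.mem_union_right _ (Finset.mem_image.mpr ⟨b, hb, rfl⟩), Or.inl (by omega)⟩
        · refine ⟨a + d, Finset.mem_union_right _ (Finset.mem_image.mpr ⟨a, ha, rfl⟩), b + d,
            Finset.mem_union_right _ (Finset.mem_image.mpr ⟨b, hb, rfl⟩), Or.inr (by omega)⟩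
    obtain ⟨x, hx, y, hy, hxy⟩ := key
    rw [sigmaRep, Nat.one_le_iff_ne_zero, ← Nat.pos_iff_ne_zero]
    apply Finset.card_pos.mpr
    refine ⟨((x : ZMod m₂), (y : ZMod m₂)), ?_⟩
    rw [Finset.mem_filter, Finset.mem_product]
    refine ⟨⟨Finset.mem_image_of_mem _ hx, Finset.mem_image_of_mem _ hy⟩, ?_⟩
    have : ((x : ZMod m₂)) + (y : ZMod m₂) = ((x + y : ℕ) : ZMod m₂) := by push_cast; ring
    rw [this]
    exact hcast _ n hxy
  · -- upper bound : sigmaRep m₂ B n ≤ 4 * r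
    set N := n.val with hN
    have hNlt : N < m₂ := ZMod.val_lt n
    set Q : ℕ → ℕ := fun v => ((C ×ˢ C).filter (fun p => p.1 + p.2 = v)).card with hQ
    -- step 1 : sigmaRep ≤ Q N + Q (N + m₂)
    have step1 : sigmaRep m₂ B n ≤ Q N + Q (N + m₂) := by
      have hsub : sigmaRep m₂ B n ≤
          (((C ×ˢ C).filter (fun p => p.1 + p.2 = N)) ∪
           ((C ×ˢ C).filter (fun p => p.1 + p.2 = N + m₂))).card := by
        rw [sigmaRep]
        apply Finset.card_le_card_of_injOn (fun p => (p.1.val, p.2.val))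
        · intro p hp
          rw [Finset.mem_coe, Finset.mem_filter, Finset.mem_product] at hp
          obtain ⟨⟨hp1, hp2⟩, hps⟩ := hp
          obtain ⟨x, hxC, hxv⟩ := Finset.mem_image.mp hp1
          obtain ⟨y, hyC, hyv⟩ := Finset.mem_image.mp hp2
          have hx1 : p.1.val = x := by rw [← hxv, ZMod.val_cast_of_lt (hClt _ hxC)]
          have hy1 : p.2.val = y := by rw [← hyv, ZMod.val_cast_of_lt (hClt _ hyC)]
          have hsum : (p.1.val + p.2.val) % m₂ = N := by
            rw [← ZMod.val_add, hps]
          have hplt : p.1.val < m₂ := ZMod.val_lt _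
          have hqlt : p.2.val < m₂ := ZMod.val_lt _
          rw [Finset.mem_coe, Finset.mem_union, Finset.mem_filter, Finset.mem_filter, Finset.mem_product]
          have hmem : p.1.val ∈ C ∧ p.2.val ∈ C := ⟨hx1 ▸ hxC, hy1 ▸ hyC⟩
          have : p.1.val + p.2.val = N ∨ p.1.val + p.2.val = N + m₂ :=
            mod_two_cases (by omega) hsum
          rcases this with h | h
          · exact Or.inl ⟨⟨hmem.1, hmem.2⟩, h⟩
          · exact Or.inr ⟨⟨hmem.1, hmem.2⟩, h⟩
        · intro p _ q _ hpq
          have e1 := congrArg Prod.fst hpq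
          have e2 := congrArg Prod.snd hpq
          simp only at e1 e2
          exact Prod.ext (ZMod.val_injective _ e1) (ZMod.val_injective _ e2)
      refine le_trans hsub (le_trans (Finset.card_union_le _ _) ?_)
      exact le_refl _
    -- step 2 : Q v ≤ Pk 0 v + Pk d v + Pk d v + Pk (d+d) v
    have piece1 : ∀ v, ((A₀ ×ˢ A₀).filter (fun p => p.1 + p.2 = v)).card ≤ Pk m₁ A 0 v := by
      intro v
      apply Finset.card_le_card
      intro p hp
      rw [Finset.mem_filter] at hp ⊢
      exact ⟨hp.1, by omega⟩
    have piece2 : ∀ v, ((A₀ ×ˢ D).filter (fun p => p.1 + p.2 = v)).card ≤ Pk m₁ A d v := by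
      intro v
      apply Finset.card_le_card_of_injOn (fun p => (p.1, p.2 - d))
      · intro p hp
        rw [Finset.mem_coe, Finset.mem_filter, Finset.mem_product] at hp
        obtain ⟨⟨hp1, hp2⟩, hps⟩ := hp
        obtain ⟨b, hb, hbv⟩ := Finset.mem_image.mp hp2
        simp only [Finset.mem_coe, Finset.mem_filter, Finset.mem_product]
        have : p.2 - d = b := by omega
        exact ⟨⟨hp1, this ▸ hb⟩, by omega⟩
      · intro p hp q hq hpq
        simp only [Finset.mem_coe, Finset.mem_filter, Finset.mem_product] at hp hq
        obtain ⟨b, _, hbv⟩ := Finset.mem_image.mp hp.1.2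
        obtain ⟨b', _, hbv'⟩ := Finset.mem_image.mp hq.1.2
        have e1 := congrArg Prod.fst hpq
        have e2 := congrArg Prod.snd hpq
        simp only at e1 e2
        exact Prod.ext e1 (by omega)
    have piece3 : ∀ v, ((D ×ˢ A₀).filter (fun p => p.1 + p.2 = v)).card ≤ Pk m₁ A d v := by
      intro v
      apply Finset.card_le_card_of_injOn (fun p => (p.1 - d, p.2))
      · intro p hp
        rw [Finset.mem_coe, Finset.mem_filter, Finset.mem_product] at hp
        obtain ⟨⟨hp1, hp2⟩, hps⟩ := hp
        obtain ⟨b, hb, hbv⟩ := Finset.mem_image.mp hp1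
        simp only [Finset.mem_coe, Finset.mem_filter, Finset.mem_product]
        have : p.1 - d = b := by omega
        exact ⟨⟨this ▸ hb, hp2⟩, by omega⟩
      · intro p hp q hq hpq
        simp only [Finset.mem_coe, Finset.mem_filter, Finset.mem_product] at hp hq
        obtain ⟨b, _, hbv⟩ := Finset.mem_image.mp hp.1.1
        obtain ⟨b', _, hbv'⟩ := Finset.mem_image.mp hq.1.1
        have e1 := congrArg Prod.fst hpq
        have e2 := congrArg Prod.snd hpq
        simp only at e1 e2
        exact Prod.ext (by omega) e2
    have piece4 : ∀ v, ((D ×ˢ D).filter (fun p => p.1 + p.2 = v)).card ≤ Pk m₁ A (d + d) v := by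
      intro v
      apply Finset.card_le_card_of_injOn (fun p => (p.1 - d, p.2 - d))
      · intro p hp
        rw [Finset.mem_coe, Finset.mem_filter, Finset.mem_product] at hp
        obtain ⟨⟨hp1, hp2⟩, hps⟩ := hp
        obtain ⟨a, ha, hav⟩ := Finset.mem_image.mp hp1
        obtain ⟨b, hb, hbv⟩ := Finset.mem_image.mp hp2
        simp only [Finset.mem_coe, Finset.mem_filter, Finset.mem_product]
        have e1 : p.1 - d = a := by omega
        have e2 : p.2 - d = b := by omega
        exact ⟨⟨e1 ▸ ha, e2 ▸ hb⟩, by omega⟩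
      · intro p hp q hq hpq
        simp only [Finset.mem_coe, Finset.mem_filter, Finset.mem_product] at hp hq
        obtain ⟨a, _, hav⟩ := Finset.mem_image.mp hp.1.1
        obtain ⟨b, _, hbv⟩ := Finset.mem_image.mp hp.1.2
        obtain ⟨a', _, hav'⟩ := Finset.mem_image.mp hq.1.1
        obtain ⟨b', _, hbv'⟩ := Finset.mem_image.mp hq.1.2
        have e1 := congrArg Prod.fst hpq
        have e2 := congrArg Prod.snd hpq
        simp only at e1 e2
        exact Prod.ext (by omega) (by omega)
    have step2 : ∀ v, Q v ≤ Pk m₁ A 0 v + Pk m₁ A d v + Pk m₁ A d v + Pk m₁ A (d + d) v := by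
      intro v
      have hCC : C ×ˢ C = ((A₀ ×ˢ A₀ ∪ A₀ ×ˢ D) ∪ D ×ˢ A₀) ∪ D ×ˢ D := by
        rw [hC, Finset.union_product, Finset.product_union, Finset.product_union]
        ac_rfl
      rw [hQ]
      simp only
      rw [hCC, Finset.filter_union, Finset.filter_union, Finset.filter_union]
      refine le_trans (Finset.card_union_le _ _) ?_
      refine add_le_add (le_trans (Finset.card_union_le _ _) ?_) (piece4 v)
      exact add_le_add (le_trans (Finset.card_union_le _ _)
        (add_le_add (piece1 v) (piece2 v))) (piece3 v)
    -- assemble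
    have main : sigmaRep m₂ B n ≤
        (Pk m₁ A 0 N + Pk m₁ A d N + Pk m₁ A d N + Pk m₁ A (d + d) N) +
        (Pk m₁ A 0 (N + m₂) + Pk m₁ A d (N + m₂) + Pk m₁ A d (N + m₂) + Pk m₁ A (d + d) (N + m₂)) :=
      le_trans step1 (add_le_add (step2 N) (step2 (N + m₂)))
    -- simplify shifted terms
    have hPd2 : Pk m₁ A d (N + m₂) ≤ Pk m₁ A 0 (N + m₁) := by
      have := Pk_le_sub A d (N + m₂)
      have heq : N + m₂ - d = N + m₁ := by omega
      rwa [heq] at this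
    have hPdd2 : Pk m₁ A (d + d) (N + m₂) ≤ Pk m₁ A 0 (N + c) := by
      have := Pk_le_sub A (d + d) (N + m₂)
      have heq : N + m₂ - (d + d) = N + c := by omega
      rwa [heq] at this
    -- case analysis
    by_cases hcase1 : N < d
    · -- Pk d N = 0, Pk (d+d) N = 0
      have z1 : Pk m₁ A d N = 0 := Pk_eq_zero_of_lt A hcase1
      have z2 : Pk m₁ A (d + d) N = 0 := Pk_eq_zero_of_lt A (by omega)
      have b1 : Pk m₁ A 0 N + Pk m₁ A 0 (N + m₁) ≤ r :=
        Pk_pair_bound A hA2 N (N + m₁) (by omega) (Nat.add_mod_right N m₁).symm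
      have b2 : Pk m₁ A 0 (N + m₁) ≤ r := Pk_single_bound A hA2 _
      have b3 : Pk m₁ A 0 (N + m₂) ≤ r := Pk_single_bound A hA2 _
      have b4 : Pk m₁ A 0 (N + c) ≤ r := Pk_single_bound A hA2 _
      omega
    · have hdN : d ≤ N := by omega
      have z3 : Pk m₁ A 0 (N + m₂) = 0 := Pk_eq_zero_of_big A (by omega)
      have hMeq : N - d + m₁ = N + c := by omega
      have bM : Pk m₁ A 0 (N - d) + Pk m₁ A 0 (N + c) ≤ r := by
        have := Pk_pair_bound A hA2 (N - d) (N - d + m₁) (by omega)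
          (Nat.add_mod_right (N - d) m₁).symm
        rwa [hMeq] at this
      have hPdN : Pk m₁ A d N ≤ Pk m₁ A 0 (N - d) := Pk_le_sub A d N
      by_cases hcase2 : N + 2 ≤ m₁
      · -- case 2
        have z4 : Pk m₁ A (d + d) N = 0 := Pk_eq_zero_of_lt A (by omega)
        have b1 : Pk m₁ A 0 N + Pk m₁ A 0 (N + m₁) ≤ r :=
          Pk_pair_bound A hA2 N (N + m₁) (by omega) (Nat.add_mod_right N m₁).symm
        have b2 : Pk m₁ A 0 (N + m₁) ≤ r := Pk_single_bound A hA2 _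
        have bM2 : Pk m₁ A 0 (N - d) ≤ r := Pk_single_bound A hA2 _
        omega
      · -- case 3
        have z5 : Pk m₁ A 0 (N + m₁) = 0 := Pk_eq_zero_of_big A (by omega)
        have b1 : Pk m₁ A 0 N ≤ r := Pk_single_bound A hA2 _
        have b2 : Pk m₁ A 0 (N - d) ≤ r := Pk_single_bound A hA2 _
        have b3 : Pk m₁ A (d + d) N ≤ r :=
          le_trans (Pk_le_sub A (d + d) N) (Pk_single_bound A hA2 _)
        omega
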